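/- (Proposition 2(ii).) Let Λ be a jointly continuous map assigning to each triple (Σ,Ω,R), with Σ and Ω n×n real symmetric positive semidefinite matrices and R an arbitrary n×n real matrix, an n×n real matrix, which is split-invariant, rotation-invariant, strongly cross-stable, and such that for every triple (Σ,Ω,R) with Ω positive definite and every linear subspace V one has ε² Λ(Σ^q_ε, Ω^q_ε, R^q_ε) → 0 as ε → 0⁺. Then Λ is strongly fragmentation invariant: for every triple (Σ,Ω,R) with Ω positive definite and every nonzero linear subspace V with V ⊆ ker Σ and V ⊆ ker(Rᵀ), one has Π_V Λ(Σ,Ω,R) = 0, Λ(Σ,Ω,R) Π_V = 0, and Λ(Σ,Ω,R) = Λ(Π̄_V Σ Π̄_V, Π̄_V Ω Π̄_V, Π̄_V R Π̄_V). -/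

import Mathlib

open Matrix
open scoped Classical

/-- `sqrtm A` is the unique symmetric positive semidefinite square root of a
symmetric positive semidefinite real matrix `A` (junk value `0` otherwise). -/
noncomputable def sqrtm {n : ℕ} (A : Matrix (Fin n) (Fin n) ℝ) : Matrix (Fin n) (Fin n) ℝ :=
  if h : A.PosSemidef then
    (h.1.eigenvectorUnitary : Matrix (Fin n) (Fin n) ℝ) *
      diagonal ((RCLike.ofReal : ℝ → ℝ) ∘ Real.sqrt ∘ h.1.eigenvalues) *
      (star h.1.eigenvectorUnitary : Matrix (Fin n) (Fin n) ℝ)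
  else 0

/-- The Kyle cross-impact matrix `Λ_kyle(Σ,Ω) = (√Ω)⁻¹ √(√Ω Σ √Ω) (√Ω)⁻¹`. -/
noncomputable def kyle {n : ℕ} (S W : Matrix (Fin n) (Fin n) ℝ) : Matrix (Fin n) (Fin n) ℝ :=
  (sqrtm W)⁻¹ * sqrtm (sqrtm W * S * sqrtm W) * (sqrtm W)⁻¹

/-- The matrix of the orthogonal projection of `ℝⁿ` (with the standard inner product)
onto the linear subspace `V`. -/
noncomputable def projMat {n : ℕ} (V : Submodule ℝ (EuclideanSpace ℝ (Fin n))) :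
    Matrix (Fin n) (Fin n) ℝ :=
  LinearMap.toMatrix' ((EuclideanSpace.equiv (Fin n) ℝ).toLinearMap ∘ₗ V.subtype ∘ₗ
    (V.orthogonalProjectionOnto).toLinearMap ∘ₗ ((EuclideanSpace.equiv (Fin n) ℝ).symm.toLinearMap))

/-- The regularizing matrix `Π̄_V + ε Π_V`. -/
noncomputable def reg {n : ℕ} (V : Submodule ℝ (EuclideanSpace ℝ (Fin n))) (ε : ℝ) :
    Matrix (Fin n) (Fin n) ℝ :=
  (1 - projMat V) + ε • projMat V

variable {n : ℕ} (V : Submodule ℝ (EuclideanSpace ℝ (Fin n)))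

lemma eq_of_mulVec_eq {A B : Matrix (Fin n) (Fin n) ℝ} (h : ∀ x, A *ᵥ x = B *ᵥ x) : A = B := by
  ext i j
  have := congrFun (h (Pi.single j 1)) i
  simpa [Matrix.mulVec_single] using this

lemma projMat_mulVec (x : Fin n → ℝ) :
    projMat V *ᵥ x = (EuclideanSpace.equiv (Fin n) ℝ)
      (V.subtype (V.orthogonalProjectionOnto ((EuclideanSpace.equiv (Fin n) ℝ).symm x))) := by
  rw [projMat, ← Matrix.toLin'_apply, Matrix.toLin'_toMatrix']
  rfl

lemma projMat_mul_self : projMat V * projMat V = projMat V := by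
  apply eq_of_mulVec_eq
  intro x
  rw [← Matrix.mulVec_mulVec, projMat_mulVec, projMat_mulVec]
  have h : ∀ y : EuclideanSpace ℝ (Fin n),
      (EuclideanSpace.equiv (Fin n) ℝ).symm ((EuclideanSpace.equiv (Fin n) ℝ) y) = y :=
    fun y => (EuclideanSpace.equiv (Fin n) ℝ).symm_apply_apply y
  rw [h]
  simp only [Submodule.coe_subtype, Submodule.orthogonalProjectionOnto_mem_subspace_eq_self]

lemma projMat_apply (i j : Fin n) :
    projMat V i j = (V.subtype (V.orthogonalProjectionOnto (EuclideanSpace.single j 1)) : EuclideanSpace ℝ (Fin n)) i := by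
  have : projMat V i j = (projMat V *ᵥ Pi.single j 1) i := by simp [Matrix.mulVec_single]
  rw [this, projMat_mulVec]
  congr 1

lemma projMat_transpose : (projMat V)ᵀ = projMat V := by
  ext i j
  rw [Matrix.transpose_apply, projMat_apply, projMat_apply]
  have key : ∀ a b : Fin n,
      ((V.subtype (V.orthogonalProjectionOnto (EuclideanSpace.single b 1)) : EuclideanSpace ℝ (Fin n))) a
        = (inner ℝ (EuclideanSpace.single a (1:ℝ))
            ((V.subtype (V.orthogonalProjectionOnto (EuclideanSpace.single b 1)) : EuclideanSpace ℝ (Fin n))) : ℝ) := by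
    intro a b
    rw [EuclideanSpace.inner_single_left]; simp
  rw [key j i, key i j]
  simp only [Submodule.coe_subtype, Submodule.coe_orthogonalProjectionOnto_apply]
  rw [← Submodule.inner_starProjection_left_eq_right, real_inner_comm]

lemma projMat_isSymm : (projMat V).IsHermitian := by
  have := projMat_transpose V
  rwa [Matrix.IsHermitian, Matrix.conjTranspose_eq_transpose_of_trivial]

lemma mul_projMat_eq_zero {S : Matrix (Fin n) (Fin n) ℝ}
    (hS : ∀ v ∈ V, S.mulVec (EuclideanSpace.equiv (Fin n) ℝ v) = 0) :
    S * projMat V = 0 := by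
  apply eq_of_mulVec_eq
  intro x
  rw [← Matrix.mulVec_mulVec, projMat_mulVec, Matrix.zero_mulVec]
  exact hS _ (SetLike.coe_mem _)

lemma projMat_mul_eq_zero_of_symm {S : Matrix (Fin n) (Fin n) ℝ} (hsymm : Sᵀ = S)
    (hS : ∀ v ∈ V, S.mulVec (EuclideanSpace.equiv (Fin n) ℝ v) = 0) :
    projMat V * S = 0 := by
  have h := congrArg Matrix.transpose (mul_projMat_eq_zero V hS)
  rwa [Matrix.transpose_mul, projMat_transpose, hsymm, Matrix.transpose_zero] at h

lemma one_sub_projMat_mul_self : (1 - projMat V) * (1 - projMat V) = 1 - projMat V := by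
  rw [Matrix.sub_mul, Matrix.mul_sub, Matrix.mul_sub, projMat_mul_self, mul_one, one_mul, mul_one]
  abel

lemma projMat_mul_one_sub : projMat V * (1 - projMat V) = 0 := by
  rw [Matrix.mul_sub, projMat_mul_self, mul_one, sub_self]

lemma one_sub_mul_projMat : (1 - projMat V) * projMat V = 0 := by
  rw [Matrix.sub_mul, projMat_mul_self, one_mul, sub_self]

lemma reg_mul_reg (a b : ℝ) : reg V a * reg V b = reg V (a * b) := by
  unfold reg
  simp only [Matrix.add_mul, Matrix.mul_add, Matrix.mul_smul, Matrix.smul_mul,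
    one_sub_projMat_mul_self, projMat_mul_one_sub, one_sub_mul_projMat, projMat_mul_self,
    smul_zero, smul_smul, add_zero, zero_add, mul_comm b a]

lemma reg_one : reg V 1 = 1 := by
  unfold reg; simp

lemma reg_inv {ε : ℝ} (hε : ε ≠ 0) : (reg V ε)⁻¹ = reg V ε⁻¹ := by
  apply Matrix.inv_eq_right_inv
  rw [reg_mul_reg, mul_inv_cancel₀ hε, reg_one]

lemma reg_transpose (ε : ℝ) : (reg V ε)ᵀ = reg V ε := by
  unfold reg
  rw [Matrix.transpose_add, Matrix.transpose_sub, Matrix.transpose_smul,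
    Matrix.transpose_one, projMat_transpose]

lemma reg_mul_one_sub (a : ℝ) : reg V a * (1 - projMat V) = 1 - projMat V := by
  unfold reg
  rw [Matrix.add_mul, one_sub_projMat_mul_self, Matrix.smul_mul, projMat_mul_one_sub,
    smul_zero, add_zero]

lemma one_sub_mul_reg (a : ℝ) : (1 - projMat V) * reg V a = 1 - projMat V := by
  unfold reg
  rw [Matrix.mul_add, one_sub_projMat_mul_self, Matrix.mul_smul, one_sub_mul_projMat,
    smul_zero, add_zero]

lemma reg_mul_projMat (a : ℝ) : reg V a * projMat V = a • projMat V := by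
  unfold reg
  rw [Matrix.add_mul, one_sub_mul_projMat, Matrix.smul_mul, projMat_mul_self, zero_add]

lemma projMat_mul_reg (a : ℝ) : projMat V * reg V a = a • projMat V := by
  unfold reg
  rw [Matrix.mul_add, projMat_mul_one_sub, Matrix.mul_smul, projMat_mul_self, zero_add]

lemma reg_isHermitian (ε : ℝ) : (reg V ε).IsHermitian := by
  rw [Matrix.IsHermitian, Matrix.conjTranspose_eq_transpose_of_trivial, reg_transpose]

lemma dotProduct_proj_self (M : Matrix (Fin n) (Fin n) ℝ) (hMt : Mᵀ = M) (hMM : M * M = M)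
    (x : Fin n → ℝ) : x ⬝ᵥ (M *ᵥ x) = (M *ᵥ x) ⬝ᵥ (M *ᵥ x) := by
  conv_lhs => rw [← hMM, ← Matrix.mulVec_mulVec, Matrix.dotProduct_mulVec]
  congr 1
  rw [← Matrix.vecMul_transpose, hMt]

lemma reg_posDef {ε : ℝ} (hε : 0 < ε) : (reg V ε).PosDef := by
  refine Matrix.PosDef.of_dotProduct_mulVec_pos (reg_isHermitian V ε) ?_
  intro x hx
  have hPt : (projMat V)ᵀ = projMat V := projMat_transpose V
  have hQt : (1 - projMat V)ᵀ = 1 - projMat V := by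
    rw [Matrix.transpose_sub, Matrix.transpose_one, hPt]
  have h1 : x ⬝ᵥ ((1 - projMat V) *ᵥ x) = ((1 - projMat V) *ᵥ x) ⬝ᵥ ((1 - projMat V) *ᵥ x) :=
    dotProduct_proj_self _ hQt (one_sub_projMat_mul_self V) x
  have h2 : x ⬝ᵥ (projMat V *ᵥ x) = (projMat V *ᵥ x) ⬝ᵥ (projMat V *ᵥ x) :=
    dotProduct_proj_self _ hPt (projMat_mul_self V) x
  have hsx : star x = x := by simp
  rw [hsx]
  unfold reg
  rw [Matrix.add_mulVec, Matrix.smul_mulVec, dotProduct_add,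
    dotProduct_smul, h1, h2, smul_eq_mul]
  have nn : ∀ v : Fin n → ℝ, 0 ≤ v ⬝ᵥ v := fun v =>
    Finset.sum_nonneg fun i _ => mul_self_nonneg (v i)
  rcases eq_or_ne (projMat V *ᵥ x) 0 with h | h
  · have hq : (1 - projMat V) *ᵥ x = x := by
      rw [Matrix.sub_mulVec, Matrix.one_mulVec, h, sub_zero]
    rw [hq, h]
    have : 0 < x ⬝ᵥ x := lt_of_le_of_ne (nn x) (fun hc => hx (dotProduct_self_eq_zero.mp hc.symm))
    simpa using this
  · have : 0 < (projMat V *ᵥ x) ⬝ᵥ (projMat V *ᵥ x) :=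
      lt_of_le_of_ne (nn _) (fun hc => h (dotProduct_self_eq_zero.mp hc.symm))
    have := mul_pos hε this
    nlinarith [nn ((1 - projMat V) *ᵥ x)]

lemma keyconj {n : ℕ}
    (Λ : Matrix (Fin n) (Fin n) ℝ → Matrix (Fin n) (Fin n) ℝ → Matrix (Fin n) (Fin n) ℝ → Matrix (Fin n) (Fin n) ℝ)
    (hsplit : ∀ S W R : Matrix (Fin n) (Fin n) ℝ, S.PosSemidef → W.PosSemidef → ∀ d : Fin n → ℝ, (∀ i, 0 < d i) →
      Λ ((diagonal d)⁻¹ * S * (diagonal d)⁻¹) (diagonal d * W * diagonal d)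
        ((diagonal d)⁻¹ * R * diagonal d)
        = (diagonal d)⁻¹ * Λ S W R * (diagonal d)⁻¹)
    (hrot : ∀ S W R : Matrix (Fin n) (Fin n) ℝ, S.PosSemidef → W.PosSemidef → ∀ O : Matrix (Fin n) (Fin n) ℝ, O * Oᵀ = 1 →
      Λ (O * S * Oᵀ) (O * W * Oᵀ) (O * R * Oᵀ) = O * Λ S W R * Oᵀ)
    {S W R P : Matrix (Fin n) (Fin n) ℝ}
    (hS : S.PosSemidef) (hW : W.PosSemidef) (hP : P.PosDef) :
    Λ (P⁻¹ * S * P⁻¹) (P * W * P) (P⁻¹ * R * P) = P⁻¹ * Λ S W R * P⁻¹ := by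
  have hH : P.IsHermitian := hP.isHermitian
  set U : Matrix (Fin n) (Fin n) ℝ := (Matrix.IsHermitian.eigenvectorUnitary hH : Matrix (Fin n) (Fin n) ℝ) with hUdef
  have hUmem := (Matrix.IsHermitian.eigenvectorUnitary hH).2
  have hU1 : U * Uᵀ = 1 := by
    have := (Matrix.mem_unitaryGroup_iff).mp hUmem
    rwa [Matrix.star_eq_conjTranspose, Matrix.conjTranspose_eq_transpose_of_trivial] at this
  have hU2 : Uᵀ * U = 1 := by
    have := (Matrix.mem_unitaryGroup_iff').mp hUmem
    rwa [Matrix.star_eq_conjTranspose, Matrix.conjTranspose_eq_transpose_of_trivial] at this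
  set d : Fin n → ℝ := hH.eigenvalues with hddef
  have hd : ∀ i, 0 < d i := hP.eigenvalues_pos
  set D : Matrix (Fin n) (Fin n) ℝ := diagonal d with hDdef
  set Dinv : Matrix (Fin n) (Fin n) ℝ := diagonal (fun i => (d i)⁻¹) with hDinvdef
  have hDD : D * Dinv = 1 := by
    rw [hDdef, hDinvdef, Matrix.diagonal_mul_diagonal]
    convert Matrix.diagonal_one with i
    exact mul_inv_cancel₀ (hd i).ne'
  have hDinv : D⁻¹ = Dinv := Matrix.inv_eq_right_inv hDD
  have hspec : P = U * D * Uᵀ := by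
    have := hH.spectral_theorem
    rwa [Unitary.conjStarAlgAut_apply, RCLike.ofReal_real_eq_id, Function.id_comp, Matrix.star_eq_conjTranspose,
      Matrix.conjTranspose_eq_transpose_of_trivial] at this
  have hPinv : P⁻¹ = U * Dinv * Uᵀ := by
    apply Matrix.inv_eq_right_inv
    rw [hspec]
    calc U * D * Uᵀ * (U * Dinv * Uᵀ) = U * (D * (Uᵀ * U) * Dinv) * Uᵀ := by
          simp only [Matrix.mul_assoc]
      _ = 1 := by rw [hU2, Matrix.mul_one, hDD, Matrix.mul_one, hU1]
  set S' := Uᵀ * S * U with hS'def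
  set W' := Uᵀ * W * U with hW'def
  set R' := Uᵀ * R * U with hR'def
  have hS' : S'.PosSemidef := by
    have := hS.mul_mul_conjTranspose_same Uᵀ
    rwa [Matrix.conjTranspose_eq_transpose_of_trivial, Matrix.transpose_transpose] at this
  have hW' : W'.PosSemidef := by
    have := hW.mul_mul_conjTranspose_same Uᵀ
    rwa [Matrix.conjTranspose_eq_transpose_of_trivial, Matrix.transpose_transpose] at this
  have hDt : Dᵀ = D := by rw [hDdef, Matrix.diagonal_transpose]
  have hDinvt : Dinvᵀ = Dinv := by rw [hDinvdef, Matrix.diagonal_transpose]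
  have psd1 : (Dinv * S' * Dinv).PosSemidef := by
    have := hS'.mul_mul_conjTranspose_same Dinv
    rwa [Matrix.conjTranspose_eq_transpose_of_trivial, hDinvt] at this
  have psd2 : (D * W' * D).PosSemidef := by
    have := hW'.mul_mul_conjTranspose_same D
    rwa [Matrix.conjTranspose_eq_transpose_of_trivial, hDt] at this
  have eq1 : P⁻¹ * S * P⁻¹ = U * (Dinv * S' * Dinv) * Uᵀ := by
    rw [hPinv, hS'def]; simp only [Matrix.mul_assoc]
  have eq2 : P * W * P = U * (D * W' * D) * Uᵀ := by
    rw [hspec, hW'def]; simp only [Matrix.mul_assoc]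
  have eq3 : P⁻¹ * R * P = U * (Dinv * R' * D) * Uᵀ := by
    rw [hPinv, hspec, hR'def]; simp only [Matrix.mul_assoc]
  have step2 : Λ (Dinv * S' * Dinv) (D * W' * D) (Dinv * R' * D)
      = Dinv * Λ S' W' R' * Dinv := by
    have := hsplit S' W' R' hS' hW' d hd
    rwa [← hDdef, hDinv] at this
  have step3 : Λ S' W' R' = Uᵀ * Λ S W R * U := by
    have h := hrot S W R hS hW Uᵀ (by rwa [Matrix.transpose_transpose])
    rw [Matrix.transpose_transpose] at h
    rw [hS'def, hW'def, hR'def, h]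
  rw [eq1, eq2, eq3, hrot _ _ _ psd1 psd2 U hU1, step2, step3, hPinv]
  simp only [Matrix.mul_assoc]
lemma reg_mul_of_projMat_mul_eq_zero {M : Matrix (Fin n) (Fin n) ℝ}
    (h : projMat V * M = 0) (a : ℝ) : reg V a * M = M := by
  unfold reg
  rw [Matrix.add_mul, Matrix.sub_mul, one_mul, h, sub_zero, Matrix.smul_mul, h,
    smul_zero, add_zero]

lemma mul_reg_of_mul_projMat_eq_zero {M : Matrix (Fin n) (Fin n) ℝ}
    (h : M * projMat V = 0) (a : ℝ) : M * reg V a = M := by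
  unfold reg
  rw [Matrix.mul_add, Matrix.mul_sub, mul_one, h, sub_zero, Matrix.mul_smul, h,
    smul_zero, add_zero]

lemma reg_expand (M : Matrix (Fin n) (Fin n) ℝ) (c : ℝ) :
    reg V c * M * reg V c
      = (1 - projMat V) * M * (1 - projMat V)
        + c • ((1 - projMat V) * M * projMat V + projMat V * M * (1 - projMat V))
        + (c * c) • (projMat V * M * projMat V) := by
  unfold reg
  simp only [Matrix.add_mul, Matrix.mul_add, Matrix.smul_mul, Matrix.mul_smul, smul_smul,
    smul_add]
  module

lemma projMat_mul_sandwich (M : Matrix (Fin n) (Fin n) ℝ) :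
    projMat V * ((1 - projMat V) * M * (1 - projMat V)) = 0 := by
  rw [← Matrix.mul_assoc, ← Matrix.mul_assoc, projMat_mul_one_sub, Matrix.zero_mul,
    Matrix.zero_mul]

lemma sandwich_mul_projMat (M : Matrix (Fin n) (Fin n) ℝ) :
    ((1 - projMat V) * M * (1 - projMat V)) * projMat V = 0 := by
  rw [Matrix.mul_assoc, one_sub_mul_projMat, Matrix.mul_zero]
attribute [local instance] Matrix.normedAddCommGroup
attribute [local instance] Matrix.normedSpace


/-- Proposition 2(ii): a jointly continuous, split- and rotation-invariant,
strongly cross-stable cross-impact model satisfying the regularity condition is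
strongly fragmentation invariant. -/
theorem strongCrossStability_implies_strongFragmentation {n : ℕ}
    (Λ : Matrix (Fin n) (Fin n) ℝ → Matrix (Fin n) (Fin n) ℝ → Matrix (Fin n) (Fin n) ℝ → Matrix (Fin n) (Fin n) ℝ)
    (hcont : ContinuousOn
      (fun p : Matrix (Fin n) (Fin n) ℝ × Matrix (Fin n) (Fin n) ℝ × Matrix (Fin n) (Fin n) ℝ => Λ p.1 p.2.1 p.2.2)
      {p : Matrix (Fin n) (Fin n) ℝ × Matrix (Fin n) (Fin n) ℝ × Matrix (Fin n) (Fin n) ℝ | p.1.PosSemidef ∧ p.2.1.PosSemidef})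
    (hsplit : ∀ S W R : Matrix (Fin n) (Fin n) ℝ, S.PosSemidef → W.PosSemidef → ∀ d : Fin n → ℝ, (∀ i, 0 < d i) →
      Λ ((diagonal d)⁻¹ * S * (diagonal d)⁻¹) (diagonal d * W * diagonal d)
        ((diagonal d)⁻¹ * R * diagonal d)
        = (diagonal d)⁻¹ * Λ S W R * (diagonal d)⁻¹)
    (hrot : ∀ S W R : Matrix (Fin n) (Fin n) ℝ, S.PosSemidef → W.PosSemidef → ∀ O : Matrix (Fin n) (Fin n) ℝ, O * Oᵀ = 1 →
      Λ (O * S * Oᵀ) (O * W * Oᵀ) (O * R * Oᵀ) = O * Λ S W R * Oᵀ)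
    (hwcs : ∀ S W R : Matrix (Fin n) (Fin n) ℝ, S.PosSemidef → W.PosSemidef →
      ∀ V : Submodule ℝ (EuclideanSpace ℝ (Fin n)), ∃ C : ℝ,
        ∀ᶠ ε in nhdsWithin (0 : ℝ) (Set.Ioi 0),
          ‖(1 - projMat V) * Λ S (reg V ε * W * reg V ε) (R * reg V ε) * projMat V‖ ≤ C ∧
          ‖projMat V * Λ S (reg V ε * W * reg V ε) (R * reg V ε) * (1 - projMat V)‖ ≤ C)
    (hscs : ∀ S W R : Matrix (Fin n) (Fin n) ℝ, S.PosSemidef → W.PosDef →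
      ∀ V : Submodule ℝ (EuclideanSpace ℝ (Fin n)),
        Filter.Tendsto
          (fun ε : ℝ =>
            (1 - projMat V) * Λ S (reg V ε * W * reg V ε) (R * reg V ε) * (1 - projMat V))
          (nhdsWithin 0 (Set.Ioi 0))
          (nhds ((1 - projMat V) * Λ ((1 - projMat V) * S * (1 - projMat V))
            ((1 - projMat V) * W * (1 - projMat V)) ((1 - projMat V) * R * (1 - projMat V))
            * (1 - projMat V))))
    (hreg : ∀ S W R : Matrix (Fin n) (Fin n) ℝ, S.PosSemidef → W.PosDef →
      ∀ V : Submodule ℝ (EuclideanSpace ℝ (Fin n)),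
        Filter.Tendsto (fun ε : ℝ => (ε ^ 2) • Λ S (reg V ε * W * reg V ε) (R * reg V ε))
          (nhdsWithin 0 (Set.Ioi 0)) (nhds 0)) :
    ∀ S W R : Matrix (Fin n) (Fin n) ℝ, S.PosSemidef → W.PosDef →
      ∀ V : Submodule ℝ (EuclideanSpace ℝ (Fin n)), V ≠ ⊥ →
      (∀ v ∈ V, S.mulVec (EuclideanSpace.equiv (Fin n) ℝ v) = 0) →
      (∀ v ∈ V, Rᵀ.mulVec (EuclideanSpace.equiv (Fin n) ℝ v) = 0) →
      projMat V * Λ S W R = 0 ∧ Λ S W R * projMat V = 0 ∧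
      Λ S W R = Λ ((1 - projMat V) * S * (1 - projMat V))
        ((1 - projMat V) * W * (1 - projMat V)) ((1 - projMat V) * R * (1 - projMat V)) := by
  intro S W R hS hW V _hV hSV hRV
  have hWpsd : W.PosSemidef := hW.posSemidef
  -- kernel facts
  have hSsymm : Sᵀ = S := by
    have := hS.isHermitian
    rwa [Matrix.IsHermitian, Matrix.conjTranspose_eq_transpose_of_trivial] at this
  have hSP : S * projMat V = 0 := mul_projMat_eq_zero V hSV
  have hPS : projMat V * S = 0 := projMat_mul_eq_zero_of_symm V hSsymm hSV
  have hRtP : Rᵀ * projMat V = 0 := mul_projMat_eq_zero V hRV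
  have hPR : projMat V * R = 0 := by
    have h := congrArg Matrix.transpose hRtP
    rwa [Matrix.transpose_mul, Matrix.transpose_transpose, projMat_transpose,
      Matrix.transpose_zero] at h
  -- the key conjugation identity
  have key : ∀ ε : ℝ, 0 < ε →
      Λ S (reg V ε * W * reg V ε) (R * reg V ε)
        = reg V ε⁻¹ * Λ S W R * reg V ε⁻¹ := by
    intro ε hε
    have h := keyconj Λ hsplit hrot (R := R) hS hWpsd (reg_posDef V hε)
    rw [reg_inv V (ne_of_gt hε), reg_mul_of_projMat_mul_eq_zero V hPS,
      mul_reg_of_mul_projMat_eq_zero V hSP, reg_mul_of_projMat_mul_eq_zero V hPR] at h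
    exact h
  -- boundedness kills the off-diagonal blocks
  obtain ⟨C0, hC0⟩ := hwcs S W R hS hWpsd V
  have hbound : ∀ᶠ ε in nhdsWithin (0:ℝ) (Set.Ioi 0),
      ‖(1 - projMat V) * Λ S W R * projMat V‖ ≤ C0 * ε ∧
      ‖projMat V * Λ S W R * (1 - projMat V)‖ ≤ C0 * ε := by
    filter_upwards [hC0, self_mem_nhdsWithin] with ε hC hε
    have hε' : (0:ℝ) < ε := hε
    rw [key ε hε'] at hC
    have e1 : (1 - projMat V) * (reg V ε⁻¹ * Λ S W R * reg V ε⁻¹) * projMat V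
        = ε⁻¹ • ((1 - projMat V) * Λ S W R * projMat V) := by
      calc (1 - projMat V) * (reg V ε⁻¹ * Λ S W R * reg V ε⁻¹) * projMat V
          = ((1 - projMat V) * reg V ε⁻¹) * Λ S W R * (reg V ε⁻¹ * projMat V) := by
            simp only [Matrix.mul_assoc]
        _ = (1 - projMat V) * Λ S W R * (ε⁻¹ • projMat V) := by
            rw [one_sub_mul_reg, reg_mul_projMat]
        _ = ε⁻¹ • ((1 - projMat V) * Λ S W R * projMat V) := by rw [Matrix.mul_smul]
    have e2 : projMat V * (reg V ε⁻¹ * Λ S W R * reg V ε⁻¹) * (1 - projMat V)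
        = ε⁻¹ • (projMat V * Λ S W R * (1 - projMat V)) := by
      calc projMat V * (reg V ε⁻¹ * Λ S W R * reg V ε⁻¹) * (1 - projMat V)
          = (projMat V * reg V ε⁻¹) * Λ S W R * (reg V ε⁻¹ * (1 - projMat V)) := by
            simp only [Matrix.mul_assoc]
        _ = (ε⁻¹ • projMat V) * Λ S W R * (1 - projMat V) := by
            rw [projMat_mul_reg, reg_mul_one_sub]
        _ = ε⁻¹ • (projMat V * Λ S W R * (1 - projMat V)) := by
            rw [Matrix.smul_mul, Matrix.smul_mul]
    rw [e1, e2] at hC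
    have norm_eq : ∀ X : Matrix (Fin n) (Fin n) ℝ, ‖X‖ = ε * ‖ε⁻¹ • X‖ := by
      intro X
      rw [norm_smul, Real.norm_eq_abs, abs_of_pos (inv_pos.mpr hε'), ← mul_assoc,
        mul_inv_cancel₀ hε'.ne', one_mul]
    constructor
    · rw [norm_eq]
      calc ε * ‖ε⁻¹ • ((1 - projMat V) * Λ S W R * projMat V)‖ ≤ ε * C0 :=
            mul_le_mul_of_nonneg_left hC.1 hε'.le
        _ = C0 * ε := mul_comm _ _
    · rw [norm_eq]
      calc ε * ‖ε⁻¹ • (projMat V * Λ S W R * (1 - projMat V))‖ ≤ ε * C0 :=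
            mul_le_mul_of_nonneg_left hC.2 hε'.le
        _ = C0 * ε := mul_comm _ _
  have tendC0 : Filter.Tendsto (fun ε : ℝ => C0 * ε) (nhdsWithin (0:ℝ) (Set.Ioi 0))
      (nhds 0) := by
    have : Filter.Tendsto (fun ε : ℝ => C0 * ε) (nhds 0) (nhds (C0 * 0)) :=
      (continuous_const.mul continuous_id).tendsto 0
    simpa using this.mono_left nhdsWithin_le_nhds
  have hMA : (1 - projMat V) * Λ S W R * projMat V = 0 := by
    apply norm_le_zero_iff.mp
    exact ge_of_tendsto tendC0 (hbound.mono fun ε h => h.1)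
  have hMB : projMat V * Λ S W R * (1 - projMat V) = 0 := by
    apply norm_le_zero_iff.mp
    exact ge_of_tendsto tendC0 (hbound.mono fun ε h => h.2)
  -- regularity kills the V-block
  have hr := hreg S W R hS hW V
  have heq2 : ∀ᶠ ε in nhdsWithin (0:ℝ) (Set.Ioi 0),
      (ε ^ 2) • Λ S (reg V ε * W * reg V ε) (R * reg V ε)
        = (ε ^ 2) • ((1 - projMat V) * Λ S W R * (1 - projMat V))
          + projMat V * Λ S W R * projMat V := by
    filter_upwards [self_mem_nhdsWithin] with ε hε
    have hε' : (0:ℝ) < ε := hε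
    rw [key ε hε', reg_expand V (Λ S W R) ε⁻¹, hMA, hMB]
    have h2 : ε ^ 2 * (ε⁻¹ * ε⁻¹) = 1 := by
      field_simp
    simp only [add_zero, smul_zero, smul_add, smul_smul, h2, one_smul, zero_add]
  have tend2 : Filter.Tendsto
      (fun ε : ℝ => (ε ^ 2) • ((1 - projMat V) * Λ S W R * (1 - projMat V))
        + projMat V * Λ S W R * projMat V)
      (nhdsWithin (0:ℝ) (Set.Ioi 0)) (nhds (projMat V * Λ S W R * projMat V)) := by
    have hcont2 : Continuous (fun ε : ℝ =>
        (ε ^ 2) • ((1 - projMat V) * Λ S W R * (1 - projMat V))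
          + projMat V * Λ S W R * projMat V) :=
      ((continuous_pow 2).smul continuous_const).add continuous_const
    have := (hcont2.tendsto 0).mono_left (nhdsWithin_le_nhds (s := Set.Ioi (0:ℝ)))
    simpa using this
  have hMC : projMat V * Λ S W R * projMat V = 0 :=
    (tendsto_nhds_unique tend2 (Filter.Tendsto.congr' heq2 hr)).symm ▸ rfl
  -- strong cross-stability identifies the complementary block
  have heq3 : ∀ᶠ ε in nhdsWithin (0:ℝ) (Set.Ioi 0),
      (1 - projMat V) * Λ S (reg V ε * W * reg V ε) (R * reg V ε) * (1 - projMat V)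
        = (1 - projMat V) * Λ S W R * (1 - projMat V) := by
    filter_upwards [self_mem_nhdsWithin] with ε hε
    have hε' : (0:ℝ) < ε := hε
    rw [key ε hε']
    calc (1 - projMat V) * (reg V ε⁻¹ * Λ S W R * reg V ε⁻¹) * (1 - projMat V)
        = ((1 - projMat V) * reg V ε⁻¹) * Λ S W R * (reg V ε⁻¹ * (1 - projMat V)) := by
          simp only [Matrix.mul_assoc]
      _ = (1 - projMat V) * Λ S W R * (1 - projMat V) := by
          rw [one_sub_mul_reg, reg_mul_one_sub]
  have hMD : (1 - projMat V) * Λ S W R * (1 - projMat V)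
      = (1 - projMat V) * Λ ((1 - projMat V) * S * (1 - projMat V))
          ((1 - projMat V) * W * (1 - projMat V)) ((1 - projMat V) * R * (1 - projMat V))
          * (1 - projMat V) :=
    tendsto_nhds_unique tendsto_const_nhds
      (Filter.Tendsto.congr' heq3 (hscs S W R hS hW V))
  -- decomposition of Λ S W R
  have hdecomp : Λ S W R = (1 - projMat V) * Λ S W R * (1 - projMat V) := by
    have h1 : projMat V + (1 - projMat V) = 1 := by abel
    calc Λ S W R = 1 * Λ S W R * 1 := by rw [one_mul, mul_one]
      _ = (projMat V + (1 - projMat V)) * Λ S W R * (projMat V + (1 - projMat V)) := by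
          rw [h1]
      _ = projMat V * Λ S W R * projMat V + projMat V * Λ S W R * (1 - projMat V)
          + (1 - projMat V) * Λ S W R * projMat V
          + (1 - projMat V) * Λ S W R * (1 - projMat V) := by
          simp only [Matrix.add_mul, Matrix.mul_add]
          abel
      _ = (1 - projMat V) * Λ S W R * (1 - projMat V) := by
          rw [hMA, hMB, hMC]
          abel
  -- invariance of the reduced problem
  have hQt : (1 - projMat V)ᵀ = 1 - projMat V := by
    rw [Matrix.transpose_sub, Matrix.transpose_one, projMat_transpose]
  have hQS : ((1 - projMat V) * S * (1 - projMat V)).PosSemidef := by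
    have := hS.mul_mul_conjTranspose_same (1 - projMat V)
    rwa [Matrix.conjTranspose_eq_transpose_of_trivial, hQt] at this
  have hQW : ((1 - projMat V) * W * (1 - projMat V)).PosSemidef := by
    have := hWpsd.mul_mul_conjTranspose_same (1 - projMat V)
    rwa [Matrix.conjTranspose_eq_transpose_of_trivial, hQt] at this
  set Λ1 := Λ ((1 - projMat V) * S * (1 - projMat V))
      ((1 - projMat V) * W * (1 - projMat V)) ((1 - projMat V) * R * (1 - projMat V))
    with hΛ1def
  have hkey2 : ∀ s : ℝ, 0 < s → Λ1 = reg V s * Λ1 * reg V s := by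
    intro s hs
    have h := keyconj Λ hsplit hrot (R := (1 - projMat V) * R * (1 - projMat V)) hQS hQW (reg_posDef V (inv_pos.mpr hs))
    rw [reg_inv V (inv_ne_zero hs.ne'), inv_inv,
      reg_mul_of_projMat_mul_eq_zero V (projMat_mul_sandwich V S),
      mul_reg_of_mul_projMat_eq_zero V (sandwich_mul_projMat V S),
      reg_mul_of_projMat_mul_eq_zero V (projMat_mul_sandwich V W),
      mul_reg_of_mul_projMat_eq_zero V (sandwich_mul_projMat V W),
      reg_mul_of_projMat_mul_eq_zero V (projMat_mul_sandwich V R),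
      mul_reg_of_mul_projMat_eq_zero V (sandwich_mul_projMat V R)] at h
    rw [hΛ1def]
    exact h
  have es : ∀ s : ℝ, 0 < s → Λ1
      = (1 - projMat V) * Λ1 * (1 - projMat V)
        + s • ((1 - projMat V) * Λ1 * projMat V + projMat V * Λ1 * (1 - projMat V))
        + (s * s) • (projMat V * Λ1 * projMat V) := by
    intro s hs
    rw [← reg_expand]
    exact hkey2 s hs
  set X1 := (1 - projMat V) * Λ1 * projMat V + projMat V * Λ1 * (1 - projMat V) with hX1def
  set Y1 := projMat V * Λ1 * projMat V with hY1def
  set D1 := (1 - projMat V) * Λ1 * (1 - projMat V) with hD1def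
  have e1 := es 1 one_pos
  have e2 := es 2 two_pos
  have e4 := es 4 four_pos
  have k1 : X1 + (3:ℝ) • Y1 = 0 := by
    calc X1 + (3:ℝ) • Y1
        = (D1 + (2:ℝ) • X1 + ((2*2:ℝ)) • Y1) - (D1 + (1:ℝ) • X1 + ((1*1:ℝ)) • Y1) := by
          module
      _ = 0 := by rw [← e2, ← e1, sub_self]
  have k2 : (2:ℝ) • X1 + (12:ℝ) • Y1 = 0 := by
    calc (2:ℝ) • X1 + (12:ℝ) • Y1
        = (D1 + (4:ℝ) • X1 + ((4*4:ℝ)) • Y1) - (D1 + (2:ℝ) • X1 + ((2*2:ℝ)) • Y1) := by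
          module
      _ = 0 := by rw [← e4, ← e2, sub_self]
  have hY : Y1 = 0 := by
    have h6 : (6:ℝ) • Y1 = 0 := by
      calc (6:ℝ) • Y1 = ((2:ℝ) • X1 + (12:ℝ) • Y1) - (2:ℝ) • (X1 + (3:ℝ) • Y1) := by
            module
        _ = 0 := by rw [k2, k1, smul_zero, sub_zero]
    have := smul_eq_zero.mp h6
    rcases this with h | h
    · norm_num at h
    · exact h
  have hX : X1 = 0 := by
    have := k1
    rw [hY, smul_zero, add_zero] at this
    exact this
  have hΛ1D1 : Λ1 = D1 := by
    rw [e1, hX, hY, smul_zero, smul_zero, add_zero, add_zero]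
  refine ⟨?_, ?_, ?_⟩
  · rw [hdecomp, projMat_mul_sandwich]
  · rw [hdecomp, sandwich_mul_projMat]
  · rw [hdecomp, hMD]
    exact hΛ1D1.symm
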